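/- (Lemma 2a, transfer of global optimisers under global rescaling.) With the notation of the sparse matching objective E, suppose (P, X̂, Ŷ) is a global minimiser of (P', X̂', Ŷ') ↦ E(X, Y, Δ_X, Δ_Y, h_X, h_Y, d_X, d_Y; P', X̂', Ŷ') over all permutation matrices P' ∈ {0,1}^{n×n} with P'𝟏ₙ = 𝟏ₙ, P'ᵀ𝟏ₙ = 𝟏ₙ and all X̂' ∈ ℝ^{M×3}, Ŷ' ∈ ℝ^{N×3}. Let s > 0, set X' := sX with PLBO Δ_X' := Π((sX|𝟏))ᵀL_XΠ((sX|𝟏)). Then (P, X̂, s·Ŷ) is a global minimiser of (P', X̂', Ŷ') ↦ E(sX, Y, Δ_X', Δ_Y, h_X, h_Y, s·d_X, d_Y; P', X̂', Ŷ') over the same feasible set. -/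

import Mathlib

open Matrix

/-- The projection matrix `Π(A) := I − A (AᵀA)⁻¹ Aᵀ`. -/
noncomputable def gramProj {m n : Type*} [Fintype m] [Fintype n] [DecidableEq m]
    [DecidableEq n] (A : Matrix m n ℝ) : Matrix m m ℝ :=
  1 - A * (Aᵀ * A)⁻¹ * Aᵀ

/-- Homogeneous coordinates: append an all-ones column to the coordinate matrix. -/
noncomputable def homog {m : ℕ} (X : Matrix (Fin m) (Fin 3) ℝ) :
    Matrix (Fin m) (Fin 3 ⊕ Fin 1) ℝ :=
  Matrix.fromCols X (Matrix.of fun _ _ => (1 : ℝ))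

/-- The projected Laplace–Beltrami operator built from a stiffness matrix `L`:
`Δ_proj := Π(Z̃)ᵀ L Π(Z̃)`. -/
noncomputable def plbo {m : ℕ} (Z : Matrix (Fin m) (Fin 3) ℝ)
    (L : Matrix (Fin m) (Fin m) ℝ) : Matrix (Fin m) (Fin m) ℝ :=
  (gramProj (homog Z))ᵀ * L * gramProj (homog Z)

/-- The Frobenius norm of a real matrix. -/
noncomputable def frobNorm {m n : ℕ} (A : Matrix (Fin m) (Fin n) ℝ) : ℝ :=
  Real.sqrt (∑ i, ∑ j, (A i j) ^ 2)

/-- The Euclidean norm of a real vector. -/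
noncomputable def vnorm {n : ℕ} (v : Fin n → ℝ) : ℝ :=
  Real.sqrt (∑ i, (v i) ^ 2)

/-- The sparse matching objective `E` of the paper. -/
noncomputable def objE {n M N : ℕ} (lamDef lamOri : ℝ)
    (ι : Fin n → Fin M) (κ : Fin n → Fin N)
    (X : Matrix (Fin M) (Fin 3) ℝ) (Y : Matrix (Fin N) (Fin 3) ℝ)
    (ΔX : Matrix (Fin M) (Fin M) ℝ) (ΔY : Matrix (Fin N) (Fin N) ℝ)
    (hX hY : Fin n → ℝ) (dX dY : ℝ)
    (P : Matrix (Fin n) (Fin n) ℝ)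
    (Xh : Matrix (Fin M) (Fin 3) ℝ) (Yh : Matrix (Fin N) (Fin 3) ℝ) : ℝ :=
  (1 / (n * dY)) * frobNorm (Xh.submatrix ι id - P * Y.submatrix κ id)
    + (1 / (n * dX)) * frobNorm (Yh.submatrix κ id - Pᵀ * X.submatrix ι id)
    + lamDef * ((1 / (M * dY)) * frobNorm (ΔX * Xh)
        + (1 / (N * dX)) * frobNorm (ΔY * Yh))
    + (lamOri / n) * vnorm (hX - P *ᵥ hY)

/-- `P` is a permutation matrix: entries in `{0,1}` and all row and column sums equal `1`. -/
def IsPermMat {n : ℕ} (P : Matrix (Fin n) (Fin n) ℝ) : Prop :=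
  (∀ i j, P i j = 0 ∨ P i j = 1) ∧
    P *ᵥ (1 : Fin n → ℝ) = 1 ∧ Pᵀ *ᵥ (1 : Fin n → ℝ) = 1

lemma gramProj_mul_right {m p : Type*} [Fintype m] [Fintype p] [DecidableEq m] [DecidableEq p]
    (A : Matrix m p ℝ) (D : Matrix p p ℝ) (hD : IsUnit D) :
    gramProj (A * D) = gramProj A := by
  have hdet : IsUnit D.det := (Matrix.isUnit_iff_isUnit_det D).mp hD
  have hdetT : IsUnit Dᵀ.det := by rwa [Matrix.det_transpose]
  unfold gramProj
  rw [Matrix.transpose_mul]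
  have h1 : (Dᵀ * Aᵀ * (A * D))⁻¹ = D⁻¹ * ((Aᵀ * A)⁻¹ * (Dᵀ)⁻¹) := by
    have : Dᵀ * Aᵀ * (A * D) = Dᵀ * (Aᵀ * A) * D := by
      simp only [Matrix.mul_assoc]
    rw [this, Matrix.mul_inv_rev, Matrix.mul_inv_rev]
  rw [h1]
  have h2 : A * D * (D⁻¹ * ((Aᵀ * A)⁻¹ * Dᵀ⁻¹)) * (Dᵀ * Aᵀ)
      = A * (D * D⁻¹) * ((Aᵀ * A)⁻¹ * ((Dᵀ⁻¹ * Dᵀ) * Aᵀ)) := by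
    simp only [Matrix.mul_assoc]
  rw [h2, Matrix.mul_nonsing_inv D hdet, Matrix.nonsing_inv_mul Dᵀ hdetT]
  simp [Matrix.mul_assoc]

lemma homog_smul {m : ℕ} (X : Matrix (Fin m) (Fin 3) ℝ) (s : ℝ) :
    homog (s • X) = homog X *
      Matrix.fromBlocks (s • (1 : Matrix (Fin 3) (Fin 3) ℝ)) 0 0 (1 : Matrix (Fin 1) (Fin 1) ℝ) := by
  unfold homog
  rw [Matrix.fromCols_mul_fromBlocks]
  congr 1 <;> simp [Matrix.mul_smul]

lemma isUnit_blockD (s : ℝ) (hs : s ≠ 0) :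
    IsUnit (Matrix.fromBlocks (s • (1 : Matrix (Fin 3) (Fin 3) ℝ)) 0 0
      (1 : Matrix (Fin 1) (Fin 1) ℝ)) := by
  rw [Matrix.isUnit_iff_isUnit_det, Matrix.det_fromBlocks_zero₂₁]
  simp [Matrix.det_smul, isUnit_iff_ne_zero, hs]

lemma plbo_smul {m : ℕ} (X : Matrix (Fin m) (Fin 3) ℝ) (L : Matrix (Fin m) (Fin m) ℝ)
    (s : ℝ) (hs : s ≠ 0) : plbo (s • X) L = plbo X L := by
  unfold plbo
  rw [homog_smul, gramProj_mul_right _ _ (isUnit_blockD s hs)]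

lemma frobNorm_smul {m k : ℕ} (c : ℝ) (A : Matrix (Fin m) (Fin k) ℝ) :
    frobNorm (c • A) = |c| * frobNorm A := by
  unfold frobNorm
  have : ∑ i, ∑ j, ((c • A) i j) ^ 2 = c ^ 2 * ∑ i, ∑ j, (A i j) ^ 2 := by
    simp [Finset.mul_sum, mul_pow]
  rw [this, Real.sqrt_mul (sq_nonneg c), Real.sqrt_sq_eq_abs]

lemma coeff_cancel (a b s f : ℝ) (hs : s ≠ 0) :
    1 / (a * (s * b)) * (s * f) = 1 / (a * b) * f := by
  obtain rfl | ha := eq_or_ne a 0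
  · simp
  obtain rfl | hb := eq_or_ne b 0
  · simp
  field_simp

lemma objE_rescale {n M N : ℕ} (lamDef lamOri : ℝ)
    (ι : Fin n → Fin M) (κ : Fin n → Fin N)
    (X : Matrix (Fin M) (Fin 3) ℝ) (Y : Matrix (Fin N) (Fin 3) ℝ)
    (LX : Matrix (Fin M) (Fin M) ℝ) (LY : Matrix (Fin N) (Fin N) ℝ)
    (hX hY : Fin n → ℝ) (dX dY : ℝ)
    (s : ℝ) (hs : 0 < s)
    (P' : Matrix (Fin n) (Fin n) ℝ)
    (Xh' : Matrix (Fin M) (Fin 3) ℝ) (Yh' : Matrix (Fin N) (Fin 3) ℝ) :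
    objE lamDef lamOri ι κ (s • X) Y (plbo (s • X) LX) (plbo Y LY)
        hX hY (s * dX) dY P' Xh' Yh'
      = objE lamDef lamOri ι κ X Y (plbo X LX) (plbo Y LY)
        hX hY dX dY P' Xh' (s⁻¹ • Yh') := by
  have hs' : s ≠ 0 := hs.ne'
  unfold objE
  rw [plbo_smul X LX s hs']
  congr 1
  congr 1
  congr 1
  · -- second term
    have harg : Yh'.submatrix κ id - P'ᵀ * (s • X).submatrix ι id
        = s • ((s⁻¹ • Yh').submatrix κ id - P'ᵀ * X.submatrix ι id) := by
      rw [smul_sub]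
      congr 1
      · ext i j
        simp only [Matrix.smul_apply, Matrix.submatrix_apply, smul_eq_mul]
        field_simp
      · ext i j
        simp only [Matrix.smul_apply, Matrix.mul_apply, Matrix.submatrix_apply,
          smul_eq_mul, Finset.mul_sum, id_eq]
        exact Finset.sum_congr rfl fun k _ => by ring
    rw [harg, frobNorm_smul, abs_of_pos hs, coeff_cancel _ _ _ _ hs']
  · -- deformation terms
    congr 1
    have harg : plbo Y LY * (s⁻¹ • Yh') = s⁻¹ • (plbo Y LY * Yh') := Matrix.mul_smul _ _ _
    rw [harg, frobNorm_smul, abs_of_pos (inv_pos.mpr hs)]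
    rw [← coeff_cancel (N : ℝ) dX s (s⁻¹ * frobNorm (plbo Y LY * Yh')) hs',
      ← mul_assoc s s⁻¹, mul_inv_cancel₀ hs', one_mul]


theorem stmt16 {n M N : ℕ}
    (X : Matrix (Fin M) (Fin 3) ℝ) (Y : Matrix (Fin N) (Fin 3) ℝ)
    (hgX : IsUnit ((homog X)ᵀ * homog X)) (hgY : IsUnit ((homog Y)ᵀ * homog Y))
    (ι : Fin n → Fin M) (κ : Fin n → Fin N)
    (LX : Matrix (Fin M) (Fin M) ℝ) (LY : Matrix (Fin N) (Fin N) ℝ)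
    (hX hY : Fin n → ℝ) (dX dY : ℝ) (hdX : 0 < dX) (hdY : 0 < dY)
    (lamDef lamOri : ℝ) (hld : 0 ≤ lamDef) (hlo : 0 ≤ lamOri)
    (s : ℝ) (hs : 0 < s)
    (P : Matrix (Fin n) (Fin n) ℝ)
    (Xh : Matrix (Fin M) (Fin 3) ℝ) (Yh : Matrix (Fin N) (Fin 3) ℝ)
    (hPfeas : IsPermMat P)
    (hmin : ∀ (P' : Matrix (Fin n) (Fin n) ℝ) (Xh' : Matrix (Fin M) (Fin 3) ℝ)
        (Yh' : Matrix (Fin N) (Fin 3) ℝ), IsPermMat P' →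
        objE lamDef lamOri ι κ X Y (plbo X LX) (plbo Y LY) hX hY dX dY P Xh Yh ≤
          objE lamDef lamOri ι κ X Y (plbo X LX) (plbo Y LY) hX hY dX dY P' Xh' Yh') :
    ∀ (P' : Matrix (Fin n) (Fin n) ℝ) (Xh' : Matrix (Fin M) (Fin 3) ℝ)
      (Yh' : Matrix (Fin N) (Fin 3) ℝ), IsPermMat P' →
      objE lamDef lamOri ι κ (s • X) Y (plbo (s • X) LX) (plbo Y LY)
          hX hY (s * dX) dY P Xh (s • Yh) ≤
        objE lamDef lamOri ι κ (s • X) Y (plbo (s • X) LX) (plbo Y LY)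
          hX hY (s * dX) dY P' Xh' Yh' := by
  intro P' Xh' Yh' hP'
  rw [objE_rescale lamDef lamOri ι κ X Y LX LY hX hY dX dY s hs P Xh (s • Yh),
    objE_rescale lamDef lamOri ι κ X Y LX LY hX hY dX dY s hs P' Xh' Yh',
    smul_smul, inv_mul_cancel₀ hs.ne', one_smul]
  exact hmin P' Xh' (s⁻¹ • Yh') hP'
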